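/- arXiv:2008.09680 — 2 statements merged into one kernel-verified Lean document; each statement's English description precedes it below -/
import Mathlib

section
/- Let G_Fac be a factor graph, r a set of 'recognized' edges, and s = \alpha(A) for a satisfying assignment A of the propositional formula prop_{G_Fac} (encoding: acyclicity of the contraction via path variables; each factor covered by exactly one selected edge; each variable covered by at least one selected edge; all edges of r selected; variables covered by r have no other selected edges; selected/unselected edge pairs on a factor induce path atoms; and path atoms are transitively closed). Then r \subseteq s, the contraction C(G_Fac, s) is acyclic, and its joint density equals that of G_Fac (soundness). -/
variable {V F : Type} [Fintype V] [Fintype F] [DecidableEq V] [DecidableEq F]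

/-- The set of factors assigned to variable `v` by the edge selection set `s`. -/
def Fof (s : Finset (V × F)) (v : V) : Finset F :=
  Finset.univ.filter (fun f => (v, f) ∈ s)

/-- The joint density of the contraction `C(G_Fac, s)`: the product, over variables,
of the assigned conditional densities (each the product of the factors selected
to that variable). -/
noncomputable def pdfC (s : Finset (V × F)) (fac : F → (V → ℝ) → ℝ) (x : V → ℝ) : ℝ :=
  ∏ v, ∏ f ∈ Fof s v, fac f x

/-- The directed edge relation of the contraction `C(G_Fac, s)`: there is an edge
`(a, b)` when some factor `f` has `(b, f)` selected and `(a, f)` an edge of the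
factor graph with `a ≠ b`. -/
def Cedge (E s : Finset (V × F)) (a b : V) : Prop :=
  ∃ f, (b, f) ∈ s ∧ (a, f) ∈ E ∧ a ≠ b

/-- The contraction edge relation used in the SAT encoding: there is a DAG edge
`(a, b)` when some factor `f` has an unselected factor-graph edge `(a, f)` and a
selected edge `(b, f)`. -/
def CedgeSel (E s : Finset (V × F)) (a b : V) : Prop :=
  ∃ f, (b, f) ∈ s ∧ (a, f) ∈ E ∧ (a, f) ∉ s

/-- soundness of the SAT encoding: Let `G_Fac` be a factor graph with
edges `E`, `r` a set of recognized edges, and let a satisfying assignment of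
`prop_{G_Fac}` be given by the selected edge set `s = α(A)` together with the path
relation `Path`.  The rules of `prop_{G_Fac}` are: (1) no self-paths, (2) every
factor has a selected edge, (3) no factor has two selected edges, (4) every variable
has a selected edge, (5) all edges of `r` are selected, (6) variables covered by `r`
have no other selected edges, (7) an unselected/selected pair of factor-graph edges
on a factor induces a path atom, (8) path atoms compose transitively.  Then
`r ⊆ s`, the contraction `C(G_Fac, s)` is acyclic, and its joint density equals
that of `G_Fac` (for every factor densities `fac` and every assignment `x`). -/
theorem stmt8 (E r s : Finset (V × F)) (Path : V → V → Prop)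
    (hsE : s ⊆ E) (hrE : r ⊆ E)
    (rule1 : ∀ v : V, ¬ Path v v)
    (rule2 : ∀ f : F, ∃ v : V, (v, f) ∈ s)
    (rule3 : ∀ (f : F) (v1 v2 : V), v1 ≠ v2 → (v1, f) ∈ s → (v2, f) ∉ s)
    (rule4 : ∀ v : V, ∃ f : F, (v, f) ∈ s)
    (rule5 : ∀ p ∈ r, p ∈ s)
    (rule6 : ∀ (v : V) (f1 f2 : F), (v, f1) ∈ r → f1 ≠ f2 → (v, f2) ∉ s)
    (rule7 : ∀ (f : F) (v1 v2 : V), (v1, f) ∈ E → (v2, f) ∈ E →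
      (v1, f) ∉ s → (v2, f) ∈ s → Path v1 v2)
    (rule8 : ∀ v1 v2 v3 : V, Path v1 v2 → Path v2 v3 → Path v1 v3)
    (fac : F → (V → ℝ) → ℝ) :
    r ⊆ s ∧
    (∀ v : V, ¬ Relation.TransGen (CedgeSel E s) v v) ∧
    (∀ x : V → ℝ, pdfC s fac x = ∏ f, fac f x) := by
  have hedge : ∀ a b, CedgeSel E s a b → Path a b := by
    rintro a b ⟨f, hbs, haE, hans⟩
    exact rule7 f a b haE (hsE hbs) hans hbs
  have hpath : ∀ a b, Relation.TransGen (CedgeSel E s) a b → Path a b := by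
    intro a b h
    induction h with
    | single h => exact hedge _ _ h
    | tail _ h ih => exact rule8 _ _ _ ih (hedge _ _ h)
  refine ⟨fun p hp => rule5 p hp, fun v h => rule1 v (hpath v v h), fun x => ?_⟩
  classical
  have g : ∀ f : F, ∃ v : V, (v, f) ∈ s := rule2
  choose gv hgv using g
  have hFof : ∀ v : V, Fof s v = Finset.univ.filter (fun f => gv f = v) := by
    intro v
    ext f
    simp only [Fof, Finset.mem_filter, Finset.mem_univ, true_and]
    constructor
    · intro hvf
      by_contra hne
      exact rule3 f (gv f) v (fun he => hne he) (hgv f) hvf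
    · rintro rfl; exact hgv f
  unfold pdfC
  calc ∏ v, ∏ f ∈ Fof s v, fac f x
      = ∏ v, ∏ f ∈ Finset.univ.filter (fun f => gv f = v), fac f x := by
        refine Finset.prod_congr rfl fun v _ => ?_
        rw [hFof v]
    _ = ∏ f, fac f x := by
        rw [← Finset.prod_fiberwise Finset.univ gv (fun f => fac f x)]
end

section
/- Conversely (completeness of the SAT encoding): if s \subseteq E(G_Fac) is an edge selection set with r \subseteq s such that C(G_Fac, s) is an acyclic sound transformation of G_Fac and variables covered by r are covered only by their r-edge, then the assignment setting Sel_{v,f} true for (v,f) \in s and P_{v1->v2} true exactly when there is a directed path from v1 to v2 in C(G_Fac, s) satisfies prop_{G_Fac}. -/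
variable {V F : Type} [Fintype V] [Fintype F] [DecidableEq V] [DecidableEq F]

/-- completeness of the SAT encoding: if `s ⊆ E` is an edge selection
set with `r ⊆ s` whose contraction `C(G_Fac, s)` is an acyclic sound transformation
of `G_Fac` (each factor in exactly one selected edge, each variable in at least one),
and variables covered by `r` are covered only by their `r`-edge, then the assignment
setting `Sel_{v,f}` true for `(v,f) ∈ s` and `P_{v1→v2}` true exactly when there is a
directed path from `v1` to `v2` in `C(G_Fac, s)` satisfies all eight rules of
`prop_{G_Fac}`. -/
theorem stmt9 (E r s : Finset (V × F))
    (hsE : s ⊆ E) (hrs : r ⊆ s)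
    (hfac : ∀ f : F, ∃! v : V, (v, f) ∈ s)
    (hvar : ∀ v : V, ∃ f : F, (v, f) ∈ s)
    (hronly : ∀ (v : V) (f1 f2 : F), (v, f1) ∈ r → f1 ≠ f2 → (v, f2) ∉ s)
    (hacyc : ∀ v : V, ¬ Relation.TransGen (Cedge E s) v v) :
    -- the path atoms are interpreted as directed paths of the contraction:
    (let Path : V → V → Prop := Relation.TransGen (Cedge E s)
    -- rule 1: acyclicity
    (∀ v : V, ¬ Path v v) ∧
    -- rule 2: all factors are covered
    (∀ f : F, ∃ v : V, (v, f) ∈ s) ∧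
    -- rule 3: factors are not covered more than once
    (∀ (f : F) (v1 v2 : V), v1 ≠ v2 → (v1, f) ∈ s → (v2, f) ∉ s) ∧
    -- rule 4: all variables are covered
    (∀ v : V, ∃ f : F, (v, f) ∈ s) ∧
    -- rule 5: edges of r are included
    (∀ p ∈ r, p ∈ s) ∧
    -- rule 6: variables covered by r are not included again
    (∀ (v : V) (f1 f2 : F), (v, f1) ∈ r → f1 ≠ f2 → (v, f2) ∉ s) ∧
    -- rule 7: selecting an edge creates edges (hence paths) in the DAG
    (∀ (f : F) (v1 v2 : V), (v1, f) ∈ E → (v2, f) ∈ E →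
      (v1, f) ∉ s → (v2, f) ∈ s → Path v1 v2) ∧
    -- rule 8: paths compose
    (∀ v1 v2 v3 : V, Path v1 v2 → Path v2 v3 → Path v1 v3)) := by
  refine ⟨hacyc, fun f => (hfac f).exists, ?_, hvar, fun p hp => hrs hp, hronly, ?_, ?_⟩
  · rintro f v1 v2 hne h1 h2
    exact hne ((hfac f).unique h1 h2)
  · intro f v1 v2 h1 h2 hn hs2
    exact Relation.TransGen.single ⟨f, hs2, h1, fun h => hn (h ▸ hs2)⟩
  · exact fun v1 v2 v3 => Relation.TransGen.trans
end
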